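/- Let (A,[·,·],{·,·,·}) be a Bol superalgebra and β an even self-morphism of it. Then (A, β∘[·,·], β²∘{·,·,·}, β) is a Hom-Bol superalgebra. Moreover, if f: A → A' is an even Bol superalgebra morphism to another Bol superalgebra with even self-morphism β' satisfying f∘β = β'∘f, then f is a morphism of the induced Hom-Bol superalgebras. -/
import Mathlib


def sgn (K : Type*) [Field K] (i j : ZMod 2) : K := (-1 : K) ^ (i * j).val

def IsBilin (K : Type*) {A : Type*} [Field K] [AddCommGroup A] [Module K A]
    (f : A → A → A) : Prop :=
  (∀ (c : K) (x y : A), f (c • x) y = c • f x y) ∧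
  (∀ x x' y : A, f (x + x') y = f x y + f x' y) ∧
  (∀ (c : K) (x y : A), f x (c • y) = c • f x y) ∧
  (∀ x y y' : A, f x (y + y') = f x y + f x y')

def IsTrilin (K : Type*) {A : Type*} [Field K] [AddCommGroup A] [Module K A]
    (f : A → A → A → A) : Prop :=
  (∀ (c : K) (x y z : A), f (c • x) y z = c • f x y z) ∧
  (∀ x x' y z : A, f (x + x') y z = f x y z + f x' y z) ∧
  (∀ (c : K) (x y z : A), f x (c • y) z = c • f x y z) ∧
  (∀ x y y' z : A, f x (y + y') z = f x y z + f x y' z) ∧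
  (∀ (c : K) (x y z : A), f x y (c • z) = c • f x y z) ∧
  (∀ x y z z' : A, f x y (z + z') = f x y z + f x y z')

def asc {A : Type*} [AddCommGroup A] (mul : A → A → A) (x y z : A) : A :=
  mul (mul x y) z - mul x (mul y z)

def hasc {A : Type*} [AddCommGroup A] (mul : A → A → A) (α : A → A) (x y z : A) : A :=
  mul (mul x y) (α z) - mul (α x) (mul y z)

def br (K : Type*) {A : Type*} [Field K] [AddCommGroup A] [Module K A]
    (mul : A → A → A) (i j : ZMod 2) (x y : A) : A :=
  (2 : K)⁻¹ • (mul x y - sgn K i j • mul y x)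

def jp (K : Type*) {A : Type*} [Field K] [AddCommGroup A] [Module K A]
    (mul : A → A → A) (i j : ZMod 2) (x y : A) : A :=
  (2 : K)⁻¹ • (mul x y + sgn K i j • mul y x)

/-- A Hom-Bol superalgebra structure on a graded module. -/
structure IsHomBol (K : Type*) {A : Type*} [Field K] [AddCommGroup A] [Module K A]
    (𝒜 : ZMod 2 → Submodule K A) (brk : A → A → A) (tr : A → A → A → A)
    (α : A → A) : Prop where
  brk_bilin : IsBilin K brk
  tr_trilin : IsTrilin K tr
  alpha_smul : ∀ (c : K) (x : A), α (c • x) = c • α x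
  alpha_add : ∀ x y : A, α (x + y) = α x + α y
  alpha_even : ∀ (i : ZMod 2) (x : A), x ∈ 𝒜 i → α x ∈ 𝒜 i
  brk_grade : ∀ (i j : ZMod 2) (x y : A), x ∈ 𝒜 i → y ∈ 𝒜 j → brk x y ∈ 𝒜 (i + j)
  tr_grade : ∀ (i j k : ZMod 2) (x y z : A),
    x ∈ 𝒜 i → y ∈ 𝒜 j → z ∈ 𝒜 k → tr x y z ∈ 𝒜 (i + j + k)
  brk_mult : ∀ x y : A, α (brk x y) = brk (α x) (α y)
  tr_mult : ∀ x y z : A, α (tr x y z) = tr (α x) (α y) (α z)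
  shb1 : ∀ (i j : ZMod 2) (x y : A), x ∈ 𝒜 i → y ∈ 𝒜 j →
    brk x y = (-(sgn K i j)) • brk y x
  shb2 : ∀ (i j k : ZMod 2) (x y z : A), x ∈ 𝒜 i → y ∈ 𝒜 j → z ∈ 𝒜 k →
    tr x y z = (-(sgn K i j)) • tr y x z
  shb3 : ∀ (i j k : ZMod 2) (x y z : A), x ∈ 𝒜 i → y ∈ 𝒜 j → z ∈ 𝒜 k →
    tr x y z + sgn K i (j + k) • tr y z x + sgn K k (i + j) • tr z x y = 0
  shb4 : ∀ (i j p q : ZMod 2) (x y u v : A),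
    x ∈ 𝒜 i → y ∈ 𝒜 j → u ∈ 𝒜 p → v ∈ 𝒜 q →
    tr (α x) (α y) (brk u v)
      = brk (tr x y u) (α (α v)) + sgn K p (i + j) • brk (α (α u)) (tr x y v)
        + sgn K (i + j) (p + q) •
          (tr (α u) (α v) (brk x y) - brk (brk (α u) (α v)) (brk (α x) (α y)))
  shb5 : ∀ (i j p q r : ZMod 2) (x y u v w : A),
    x ∈ 𝒜 i → y ∈ 𝒜 j → u ∈ 𝒜 p → v ∈ 𝒜 q → w ∈ 𝒜 r →
    tr (α (α x)) (α (α y)) (tr u v w)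
      = tr (tr x y u) (α (α v)) (α (α w))
        + sgn K p (i + j) • tr (α (α u)) (tr x y v) (α (α w))
        + sgn K (i + j) (p + q) • tr (α (α u)) (α (α v)) (tr x y w)

/-- A Bol superalgebra structure on a graded module. -/
structure IsBol (K : Type*) {A : Type*} [Field K] [AddCommGroup A] [Module K A]
    (𝒜 : ZMod 2 → Submodule K A) (brk : A → A → A) (tr : A → A → A → A) : Prop where
  brk_bilin : IsBilin K brk
  tr_trilin : IsTrilin K tr
  brk_grade : ∀ (i j : ZMod 2) (x y : A), x ∈ 𝒜 i → y ∈ 𝒜 j → brk x y ∈ 𝒜 (i + j)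
  tr_grade : ∀ (i j k : ZMod 2) (x y z : A),
    x ∈ 𝒜 i → y ∈ 𝒜 j → z ∈ 𝒜 k → tr x y z ∈ 𝒜 (i + j + k)
  sb1 : ∀ (i j : ZMod 2) (x y : A), x ∈ 𝒜 i → y ∈ 𝒜 j →
    brk x y = (-(sgn K i j)) • brk y x
  sb2 : ∀ (i j k : ZMod 2) (x y z : A), x ∈ 𝒜 i → y ∈ 𝒜 j → z ∈ 𝒜 k →
    tr x y z = (-(sgn K i j)) • tr y x z
  sb3 : ∀ (i j k : ZMod 2) (x y z : A), x ∈ 𝒜 i → y ∈ 𝒜 j → z ∈ 𝒜 k →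
    tr x y z + sgn K i (j + k) • tr y z x + sgn K k (i + j) • tr z x y = 0
  sb4 : ∀ (i j p q : ZMod 2) (x y u v : A),
    x ∈ 𝒜 i → y ∈ 𝒜 j → u ∈ 𝒜 p → v ∈ 𝒜 q →
    tr x y (brk u v)
      = brk (tr x y u) v + sgn K p (i + j) • brk u (tr x y v)
        + sgn K (i + j) (p + q) • (tr u v (brk x y) - brk (brk u v) (brk x y))
  sb5 : ∀ (i j p q r : ZMod 2) (x y u v w : A),
    x ∈ 𝒜 i → y ∈ 𝒜 j → u ∈ 𝒜 p → v ∈ 𝒜 q → w ∈ 𝒜 r →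
    tr x y (tr u v w)
      = tr (tr x y u) v w + sgn K p (i + j) • tr u (tr x y v) w
        + sgn K (i + j) (p + q) • tr u v (tr x y w)

/-- Corollary 5.1: Yau twisting of a Bol superalgebra along an even self-morphism
gives a Hom-Bol superalgebra, and even Bol morphisms intertwining the twisting
maps are morphisms of the induced Hom-Bol superalgebras. -/
theorem stmt8 {K A A' : Type*} [Field K] [AddCommGroup A] [Module K A]
    [AddCommGroup A'] [Module K A']
    (𝒜 : ZMod 2 → Submodule K A) (hds : DirectSum.IsInternal 𝒜)
    (brk : A → A → A) (tr : A → A → A → A)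
    (hA : IsBol K 𝒜 brk tr)
    (β : A → A)
    (hβsmul : ∀ (c : K) (x : A), β (c • x) = c • β x)
    (hβadd : ∀ x y : A, β (x + y) = β x + β y)
    (hβeven : ∀ (i : ZMod 2) (x : A), x ∈ 𝒜 i → β x ∈ 𝒜 i)
    (hβbrk : ∀ x y : A, β (brk x y) = brk (β x) (β y))
    (hβtr : ∀ x y z : A, β (tr x y z) = tr (β x) (β y) (β z))
    (𝒜' : ZMod 2 → Submodule K A') (hds' : DirectSum.IsInternal 𝒜')
    (brk' : A' → A' → A') (tr' : A' → A' → A' → A')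
    (hA' : IsBol K 𝒜' brk' tr')
    (β' : A' → A')
    (hβ'smul : ∀ (c : K) (x : A'), β' (c • x) = c • β' x)
    (hβ'add : ∀ x y : A', β' (x + y) = β' x + β' y)
    (hβ'even : ∀ (i : ZMod 2) (x : A'), x ∈ 𝒜' i → β' x ∈ 𝒜' i)
    (hβ'brk : ∀ x y : A', β' (brk' x y) = brk' (β' x) (β' y))
    (hβ'tr : ∀ x y z : A', β' (tr' x y z) = tr' (β' x) (β' y) (β' z))
    (f : A → A')
    (hfsmul : ∀ (c : K) (x : A), f (c • x) = c • f x)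
    (hfadd : ∀ x y : A, f (x + y) = f x + f y)
    (hfeven : ∀ (i : ZMod 2) (x : A), x ∈ 𝒜 i → f x ∈ 𝒜' i)
    (hfbrk : ∀ x y : A, f (brk x y) = brk' (f x) (f y))
    (hftr : ∀ x y z : A, f (tr x y z) = tr' (f x) (f y) (f z))
    (hfβ : ∀ x : A, f (β x) = β' (f x)) :
    IsHomBol K 𝒜 (fun x y => β (brk x y)) (fun x y z => β (β (tr x y z))) β ∧
    (∀ x y : A, f (β (brk x y)) = β' (brk' (f x) (f y))) ∧
    (∀ x y z : A, f (β (β (tr x y z))) = β' (β' (tr' (f x) (f y) (f z)))) ∧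
    (∀ x : A, f (β x) = β' (f x)) := by
  have hβ0 : β 0 = 0 := by simpa using hβsmul 0 0
  have hβneg : ∀ z : A, β (-z) = -β z := fun z => by
    simpa using hβsmul (-1 : K) z
  have hβsub : ∀ x y : A, β (x - y) = β x - β y := fun x y => by
    rw [sub_eq_add_neg, hβadd, hβneg, sub_eq_add_neg]
  obtain ⟨b1, b2, b3, b4⟩ := hA.brk_bilin
  obtain ⟨t1, t2, t3, t4, t5, t6⟩ := hA.tr_trilin
  refine ⟨?_, ?_, ?_, ?_⟩
  · constructor
    · exact ⟨fun c x y => by beta_reduce; rw [b1, hβsmul],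
        fun x x' y => by beta_reduce; rw [b2, hβadd],
        fun c x y => by beta_reduce; rw [b3, hβsmul],
        fun x y y' => by beta_reduce; rw [b4, hβadd]⟩
    · exact ⟨fun c x y z => by beta_reduce; rw [t1, hβsmul, hβsmul],
        fun x x' y z => by beta_reduce; rw [t2, hβadd, hβadd],
        fun c x y z => by beta_reduce; rw [t3, hβsmul, hβsmul],
        fun x y y' z => by beta_reduce; rw [t4, hβadd, hβadd],
        fun c x y z => by beta_reduce; rw [t5, hβsmul, hβsmul],
        fun x y z z' => by beta_reduce; rw [t6, hβadd, hβadd]⟩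
    · exact hβsmul
    · exact hβadd
    · exact hβeven
    · exact fun i j x y hx hy => hβeven _ _ (hA.brk_grade i j x y hx hy)
    · exact fun i j k x y z hx hy hz =>
        hβeven _ _ (hβeven _ _ (hA.tr_grade i j k x y z hx hy hz))
    · exact fun x y => congrArg β (hβbrk x y)
    · exact fun x y z => congrArg β (congrArg β (hβtr x y z))
    · exact fun i j x y hx hy => by beta_reduce; rw [hA.sb1 i j x y hx hy, hβsmul]
    · exact fun i j k x y z hx hy hz => by
        rw [hA.sb2 i j k x y z hx hy hz, hβsmul, hβsmul]
    · intro i j k x y z hx hy hz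
      have h2 := congrArg (fun w => β (β w)) (hA.sb3 i j k x y z hx hy hz)
      simp only [hβadd, hβsmul, hβ0] at h2
      exact h2
    · intro i j p q x y u v hx hy hu hv
      have h2 := congrArg (fun w => β (β (β w))) (hA.sb4 i j p q x y u v hx hy hu hv)
      simp only [hβadd, hβsmul, hβsub, hβbrk, hβtr] at h2 ⊢
      exact h2
    · intro i j p q r x y u v w hx hy hu hv hw
      have h2 := congrArg (fun e => β (β (β (β e))))
        (hA.sb5 i j p q r x y u v w hx hy hu hv hw)
      simp only [hβadd, hβsmul, hβsub, hβbrk, hβtr] at h2 ⊢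
      exact h2
  · exact fun x y => by rw [hfβ, hfbrk]
  · exact fun x y z => by rw [hfβ, hfβ, hftr]
  · exact hfβ
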